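/- Let k be a field of characteristic ≠ 2 and d ∈ k*. Let v = [[0,1],[d,0]], a 2×2 matrix over k of trace zero with −det(v) = d. Then: (i) every 2×2 matrix w over k with trace zero and −det(w) = d is of the form w = g v g⁻¹ for some g ∈ GL₂(k); and (ii) for g₁, g₂ ∈ GL₂(k), the matrices g₁ v g₁⁻¹ and g₂ v g₂⁻¹ are conjugate by an element of SL₂(k) if and only if there exist a, b ∈ k with det(g₁) = det(g₂)·(a² − d·b²). In particular, the SL₂(k)-conjugacy orbits on trace-zero 2×2 matrices w with −det(w) = d are in bijection with the quotient group k*/N(K*), where K = k[x]/(x² − d) and N(a + bx) = a² − d·b². -/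

import Mathlib

set_option linter.unreachableTactic false
set_option linter.unusedTactic false


section Aux
variable {k : Type*} [Field k]

lemma SL2aux_conj_exists (hchar : (2 : k) ≠ 0) (d : k) (hd : d ≠ 0)
    (w : Matrix (Fin 2) (Fin 2) k) (htr : Matrix.trace w = 0) (hdet : -Matrix.det w = d) :
    ∃ g : Matrix (Fin 2) (Fin 2) k, g.det ≠ 0 ∧ w * g = g * !![0, 1; d, 0] := by
  obtain ⟨p, q, r, s, rfl⟩ : ∃ p q r s, w = !![p, q; r, s] :=
    ⟨_, _, _, _, Matrix.eta_fin_two w⟩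
  rw [Matrix.trace_fin_two_of] at htr
  rw [Matrix.det_fin_two_of] at hdet
  by_cases hr : r ≠ 0
  · refine ⟨!![p, 1; r, 0], by simp [Matrix.det_fin_two_of, hr], ?_⟩
    ext i j
    fin_cases i <;> fin_cases j <;>
      simp [Matrix.mul_apply, Fin.sum_univ_two] <;>
      first
        | linear_combination hdet + p * htr
        | linear_combination r * htr
        | ring
  · push_neg at hr
    subst hr
    by_cases hq : q ≠ 0
    · refine ⟨!![q, 0; s, 1], by simp [Matrix.det_fin_two_of, hq], ?_⟩
      ext i j
      fin_cases i <;> fin_cases j <;>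
        simp [Matrix.mul_apply, Fin.sum_univ_two] <;>
        first
          | linear_combination q * htr | linear_combination hdet + s * htr
          | linear_combination -hdet
          | ring
    · push_neg at hq
      subst hq
      have hps : s = -p := by linear_combination htr
      subst hps
      have hp2 : p * p = d := by linear_combination hdet
      have hp : p ≠ 0 := fun h => hd (by rw [h] at hp2; linear_combination -hp2)
      refine ⟨!![p, 1; -p, 1], ?_, ?_⟩
      · simp only [Matrix.det_fin_two_of]
        intro h
        exact hchar (by
          have : (2 : k) * p = 0 := by linear_combination h
          rcases mul_eq_zero.mp this with h2 | h2
          · exact h2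
          · exact absurd h2 hp)
      · ext i j
        fin_cases i <;> fin_cases j <;>
          simp [Matrix.mul_apply, Fin.sum_univ_two] <;>
          first
            | linear_combination hp2
            | linear_combination -hp2
            | ring
end Aux

section Aux2
variable {k : Type*} [Field k]

/-- Centralizer of v: if t commutes with v then t = !![a,b; d*b, a]. -/
lemma SL2aux_centralizer (d : k) (t : Matrix (Fin 2) (Fin 2) k)
    (h : t * !![0, 1; d, 0] = !![0, 1; d, 0] * t) :
    t 1 0 = d * t 0 1 ∧ t 1 1 = t 0 0 := by
  have h00 := congrFun (congrFun h 0) 0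
  have h01 := congrFun (congrFun h 0) 1
  simp [Matrix.mul_apply, Fin.sum_univ_two] at h00 h01
  constructor
  · linear_combination -h00
  · linear_combination -h01

lemma SL2aux_commutes (d a b : k) :
    !![a, b; d * b, a] * !![0, 1; d, 0] = !![0, 1; d, 0] * !![a, b; d * b, a] := by
  rw [Matrix.mul_fin_two, Matrix.mul_fin_two]
  congr 1 <;> ring_nf

lemma SL2aux_det_form (d a b : k) : Matrix.det !![a, b; d * b, a] = a ^ 2 - d * b ^ 2 := by
  rw [Matrix.det_fin_two_of]; ring

/-- Part (ii), full iff. -/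
lemma SL2aux_part2 (d : k) (g₁ g₂ : GL (Fin 2) k) :
    (∃ s : Matrix (Fin 2) (Fin 2) k, Matrix.det s = 1 ∧
        s * ((g₁ : Matrix (Fin 2) (Fin 2) k) * !![0, 1; d, 0] *
            ((g₁⁻¹ : GL (Fin 2) k) : Matrix (Fin 2) (Fin 2) k)) =
          ((g₂ : Matrix (Fin 2) (Fin 2) k) * !![0, 1; d, 0] *
            ((g₂⁻¹ : GL (Fin 2) k) : Matrix (Fin 2) (Fin 2) k)) * s) ↔
      ∃ a b : k, Matrix.det (g₁ : Matrix (Fin 2) (Fin 2) k) =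
        Matrix.det (g₂ : Matrix (Fin 2) (Fin 2) k) * (a ^ 2 - d * b ^ 2) := by
  set v : Matrix (Fin 2) (Fin 2) k := !![0, 1; d, 0] with hv
  have hi1 : ((g₁⁻¹ : GL (Fin 2) k) : Matrix (Fin 2) (Fin 2) k) * g₁ = 1 := g₁.inv_mul
  have hi2 : ((g₂⁻¹ : GL (Fin 2) k) : Matrix (Fin 2) (Fin 2) k) * g₂ = 1 := g₂.inv_mul
  have hcan1 : ∀ A : Matrix (Fin 2) (Fin 2) k,
      ((g₁⁻¹ : GL (Fin 2) k) : Matrix (Fin 2) (Fin 2) k) *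
        ((g₁ : Matrix (Fin 2) (Fin 2) k) * A) = A := fun A => by
    rw [← Matrix.mul_assoc, hi1, Matrix.one_mul]
  have hcan2 : ∀ A : Matrix (Fin 2) (Fin 2) k,
      ((g₂⁻¹ : GL (Fin 2) k) : Matrix (Fin 2) (Fin 2) k) *
        ((g₂ : Matrix (Fin 2) (Fin 2) k) * A) = A := fun A => by
    rw [← Matrix.mul_assoc, hi2, Matrix.one_mul]
  have hdet1i : Matrix.det ((g₁⁻¹ : GL (Fin 2) k) : Matrix (Fin 2) (Fin 2) k) *
      Matrix.det (g₁ : Matrix (Fin 2) (Fin 2) k) = 1 := by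
    rw [← Matrix.det_mul, hi1, Matrix.det_one]
  have hdet2i : Matrix.det ((g₂⁻¹ : GL (Fin 2) k) : Matrix (Fin 2) (Fin 2) k) *
      Matrix.det (g₂ : Matrix (Fin 2) (Fin 2) k) = 1 := by
    rw [← Matrix.det_mul, hi2, Matrix.det_one]
  have hd1 : Matrix.det (g₁ : Matrix (Fin 2) (Fin 2) k) ≠ 0 :=
    fun h => by rw [h, mul_zero] at hdet1i; exact one_ne_zero hdet1i.symm
  constructor
  · rintro ⟨s, hs1, hs⟩
    set t : Matrix (Fin 2) (Fin 2) k :=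
      ((g₂⁻¹ : GL (Fin 2) k) : Matrix (Fin 2) (Fin 2) k) * s * g₁ with ht
    have htc : t * v = v * t := by
      have key : ((g₂⁻¹ : GL (Fin 2) k) : Matrix (Fin 2) (Fin 2) k) *
          (s * ((g₁ : Matrix (Fin 2) (Fin 2) k) * v * ((g₁⁻¹ : GL (Fin 2) k) :
            Matrix (Fin 2) (Fin 2) k))) * g₁ =
          ((g₂⁻¹ : GL (Fin 2) k) : Matrix (Fin 2) (Fin 2) k) *
          (((g₂ : Matrix (Fin 2) (Fin 2) k) * v * ((g₂⁻¹ : GL (Fin 2) k) :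
            Matrix (Fin 2) (Fin 2) k)) * s) * g₁ := by rw [hs]
      calc t * v = ((g₂⁻¹ : GL (Fin 2) k) : Matrix (Fin 2) (Fin 2) k) *
            (s * ((g₁ : Matrix (Fin 2) (Fin 2) k) * v *
              ((g₁⁻¹ : GL (Fin 2) k) : Matrix (Fin 2) (Fin 2) k))) * g₁ := by
              rw [ht]
              simp only [Matrix.mul_assoc]
              rw [hi1, Matrix.mul_one]
        _ = ((g₂⁻¹ : GL (Fin 2) k) : Matrix (Fin 2) (Fin 2) k) *
            (((g₂ : Matrix (Fin 2) (Fin 2) k) * v * ((g₂⁻¹ : GL (Fin 2) k) :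
              Matrix (Fin 2) (Fin 2) k)) * s) * g₁ := key
        _ = v * t := by
              rw [ht]
              simp only [Matrix.mul_assoc]
              rw [hcan2]
    obtain ⟨hc1, hc2⟩ := SL2aux_centralizer d t htc
    refine ⟨t 0 0, t 0 1, ?_⟩
    have hdt : Matrix.det t = (t 0 0) ^ 2 - d * (t 0 1) ^ 2 := by
      rw [Matrix.det_fin_two, hc1, hc2]; ring
    have hts : Matrix.det t = Matrix.det ((g₂⁻¹ : GL (Fin 2) k) : Matrix (Fin 2) (Fin 2) k) *
        Matrix.det s * Matrix.det (g₁ : Matrix (Fin 2) (Fin 2) k) := by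
      rw [ht, Matrix.det_mul, Matrix.det_mul]
    rw [hs1, mul_one] at hts
    calc Matrix.det (g₁ : Matrix (Fin 2) (Fin 2) k)
        = (Matrix.det ((g₂⁻¹ : GL (Fin 2) k) : Matrix (Fin 2) (Fin 2) k) *
            Matrix.det (g₂ : Matrix (Fin 2) (Fin 2) k)) *
          Matrix.det (g₁ : Matrix (Fin 2) (Fin 2) k) := by rw [hdet2i, one_mul]
      _ = Matrix.det (g₂ : Matrix (Fin 2) (Fin 2) k) * Matrix.det t := by
            rw [hts]; ring
      _ = Matrix.det (g₂ : Matrix (Fin 2) (Fin 2) k) * ((t 0 0) ^ 2 - d * (t 0 1) ^ 2) := by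
            rw [hdt]
  · rintro ⟨a, b, hab⟩
    set t : Matrix (Fin 2) (Fin 2) k := !![a, b; d * b, a] with ht
    refine ⟨(g₂ : Matrix (Fin 2) (Fin 2) k) * t * ((g₁⁻¹ : GL (Fin 2) k) :
      Matrix (Fin 2) (Fin 2) k), ?_, ?_⟩
    · have key : Matrix.det ((g₂ : Matrix (Fin 2) (Fin 2) k) * t *
          ((g₁⁻¹ : GL (Fin 2) k) : Matrix (Fin 2) (Fin 2) k)) *
          Matrix.det (g₁ : Matrix (Fin 2) (Fin 2) k) =
          Matrix.det (g₁ : Matrix (Fin 2) (Fin 2) k) := by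
        rw [Matrix.det_mul, Matrix.det_mul, ht, SL2aux_det_form]
        calc Matrix.det (g₂ : Matrix (Fin 2) (Fin 2) k) * (a ^ 2 - d * b ^ 2) *
              Matrix.det ((g₁⁻¹ : GL (Fin 2) k) : Matrix (Fin 2) (Fin 2) k) *
              Matrix.det (g₁ : Matrix (Fin 2) (Fin 2) k)
            = Matrix.det (g₂ : Matrix (Fin 2) (Fin 2) k) * (a ^ 2 - d * b ^ 2) *
              (Matrix.det ((g₁⁻¹ : GL (Fin 2) k) : Matrix (Fin 2) (Fin 2) k) *
              Matrix.det (g₁ : Matrix (Fin 2) (Fin 2) k)) := by ring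
          _ = Matrix.det (g₁ : Matrix (Fin 2) (Fin 2) k) := by rw [hdet1i, mul_one, ← hab]
      exact mul_right_cancel₀ hd1 (by rw [key, one_mul])
    · calc (g₂ : Matrix (Fin 2) (Fin 2) k) * t * ((g₁⁻¹ : GL (Fin 2) k) :
            Matrix (Fin 2) (Fin 2) k) *
            ((g₁ : Matrix (Fin 2) (Fin 2) k) * v * ((g₁⁻¹ : GL (Fin 2) k) :
              Matrix (Fin 2) (Fin 2) k))
          = (g₂ : Matrix (Fin 2) (Fin 2) k) * (t * v) * ((g₁⁻¹ : GL (Fin 2) k) :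
              Matrix (Fin 2) (Fin 2) k) := by
            simp only [Matrix.mul_assoc]
            rw [hcan1]
        _ = (g₂ : Matrix (Fin 2) (Fin 2) k) * (v * t) * ((g₁⁻¹ : GL (Fin 2) k) :
              Matrix (Fin 2) (Fin 2) k) := by rw [ht, hv, SL2aux_commutes]
        _ = (g₂ : Matrix (Fin 2) (Fin 2) k) * v * ((g₂⁻¹ : GL (Fin 2) k) :
              Matrix (Fin 2) (Fin 2) k) *
            ((g₂ : Matrix (Fin 2) (Fin 2) k) * t * ((g₁⁻¹ : GL (Fin 2) k) :
              Matrix (Fin 2) (Fin 2) k)) := by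
            simp only [Matrix.mul_assoc]
            rw [hcan2]
end Aux2


section Aux3
variable {k : Type*} [Field k]

lemma SL2aux_gl_det_ne_zero (g : GL (Fin 2) k) :
    Matrix.det (g : Matrix (Fin 2) (Fin 2) k) ≠ 0 := by
  have h : Matrix.det ((g⁻¹ : GL (Fin 2) k) : Matrix (Fin 2) (Fin 2) k) *
      Matrix.det (g : Matrix (Fin 2) (Fin 2) k) = 1 := by
    rw [← Matrix.det_mul, g.inv_mul, Matrix.det_one]
  exact fun h0 => one_ne_zero (by rw [← h, h0, mul_zero] : (1:k) = 0)

lemma SL2aux_part1 (hchar : (2 : k) ≠ 0) (d : k) (hd : d ≠ 0)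
    (w : Matrix (Fin 2) (Fin 2) k) (htr : Matrix.trace w = 0) (hdet : -Matrix.det w = d) :
    ∃ g : GL (Fin 2) k,
      w = (g : Matrix (Fin 2) (Fin 2) k) * !![0, 1; d, 0] *
        ((g⁻¹ : GL (Fin 2) k) : Matrix (Fin 2) (Fin 2) k) := by
  obtain ⟨g, hg, hcomm⟩ := SL2aux_conj_exists hchar d hd w htr hdet
  refine ⟨Matrix.GeneralLinearGroup.mkOfDetNeZero g hg, ?_⟩
  set G := Matrix.GeneralLinearGroup.mkOfDetNeZero g hg with hG
  have hcoe : (G : Matrix (Fin 2) (Fin 2) k) = g := rfl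
  have h1 : (G : Matrix (Fin 2) (Fin 2) k) * ((G⁻¹ : GL (Fin 2) k) :
      Matrix (Fin 2) (Fin 2) k) = 1 := G.mul_inv
  calc w = w * ((G : Matrix (Fin 2) (Fin 2) k) * ((G⁻¹ : GL (Fin 2) k) :
          Matrix (Fin 2) (Fin 2) k)) := by rw [h1, Matrix.mul_one]
    _ = (w * g) * ((G⁻¹ : GL (Fin 2) k) : Matrix (Fin 2) (Fin 2) k) := by
          rw [hcoe, Matrix.mul_assoc]
    _ = (G : Matrix (Fin 2) (Fin 2) k) * !![0, 1; d, 0] *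
          ((G⁻¹ : GL (Fin 2) k) : Matrix (Fin 2) (Fin 2) k) := by rw [hcomm, hcoe]

lemma SL2aux_conj_mem (d : k) (g : GL (Fin 2) k) :
    Matrix.trace ((g : Matrix (Fin 2) (Fin 2) k) * !![0, 1; d, 0] *
      ((g⁻¹ : GL (Fin 2) k) : Matrix (Fin 2) (Fin 2) k)) = 0 ∧
    -Matrix.det ((g : Matrix (Fin 2) (Fin 2) k) * !![0, 1; d, 0] *
      ((g⁻¹ : GL (Fin 2) k) : Matrix (Fin 2) (Fin 2) k)) = d := by
  constructor
  · rw [Matrix.trace_mul_cycle, g.inv_mul, Matrix.one_mul,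
      Matrix.trace_fin_two_of]
    simp
  · rw [Matrix.det_mul, Matrix.det_mul]
    have h : Matrix.det (g : Matrix (Fin 2) (Fin 2) k) *
        Matrix.det ((g⁻¹ : GL (Fin 2) k) : Matrix (Fin 2) (Fin 2) k) = 1 := by
      rw [← Matrix.det_mul, g.mul_inv, Matrix.det_one]
    rw [Matrix.det_fin_two_of]
    calc -(Matrix.det (g : Matrix (Fin 2) (Fin 2) k) * (0 * 0 - 1 * d) *
          Matrix.det ((g⁻¹ : GL (Fin 2) k) : Matrix (Fin 2) (Fin 2) k))
        = Matrix.det (g : Matrix (Fin 2) (Fin 2) k) *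
          Matrix.det ((g⁻¹ : GL (Fin 2) k) : Matrix (Fin 2) (Fin 2) k) * d := by ring
      _ = d := by rw [h, one_mul]

end Aux3

/-- Let `k` be a field of characteristic `≠ 2` and `d ∈ k*`.  Let `v = [[0,1],[d,0]]`, a
trace-zero `2×2` matrix with `-det v = d`.  Then:
(i) every trace-zero `w` with `-det w = d` equals `g v g⁻¹` for some `g ∈ GL₂(k)`;
(ii) `g₁ v g₁⁻¹` and `g₂ v g₂⁻¹` are conjugate by an element of `SL₂(k)` iff
`det g₁ = det g₂ · (a² - d·b²)` for some `a, b ∈ k`;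
and in particular the `SL₂(k)`-orbits of trace-zero matrices `w` with `-det w = d` are in
bijection with `k*/N(K*)` where `K = k[x]/(x²-d)` has norm `N(a+bx) = a² - d·b²`. -/
theorem sl2_orbits_on_trace_zero_matrices {k : Type*} [Field k] (hchar : (2 : k) ≠ 0)
    (d : k) (hd : d ≠ 0) :
    (∀ w : Matrix (Fin 2) (Fin 2) k, Matrix.trace w = 0 → -Matrix.det w = d →
      ∃ g : GL (Fin 2) k,
        w = (g : Matrix (Fin 2) (Fin 2) k) * !![0, 1; d, 0] *
          ((g⁻¹ : GL (Fin 2) k) : Matrix (Fin 2) (Fin 2) k)) ∧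
    (∀ g₁ g₂ : GL (Fin 2) k,
      (∃ s : Matrix (Fin 2) (Fin 2) k, Matrix.det s = 1 ∧
          s * ((g₁ : Matrix (Fin 2) (Fin 2) k) * !![0, 1; d, 0] *
              ((g₁⁻¹ : GL (Fin 2) k) : Matrix (Fin 2) (Fin 2) k)) =
            ((g₂ : Matrix (Fin 2) (Fin 2) k) * !![0, 1; d, 0] *
              ((g₂⁻¹ : GL (Fin 2) k) : Matrix (Fin 2) (Fin 2) k)) * s) ↔
        ∃ a b : k, Matrix.det (g₁ : Matrix (Fin 2) (Fin 2) k) =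
          Matrix.det (g₂ : Matrix (Fin 2) (Fin 2) k) * (a ^ 2 - d * b ^ 2)) ∧
    Nonempty (
      Quot (fun w₁ w₂ : {w : Matrix (Fin 2) (Fin 2) k //
            Matrix.trace w = 0 ∧ -Matrix.det w = d} =>
          ∃ s : Matrix (Fin 2) (Fin 2) k, Matrix.det s = 1 ∧ s * w₁.val = w₂.val * s) ≃
      Quot (fun c₁ c₂ : kˣ => ∃ a b : k, (c₁ : k) = (c₂ : k) * (a ^ 2 - d * b ^ 2))) := by
  refine ⟨SL2aux_part1 hchar d hd, SL2aux_part2 d, ?_⟩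
  set rS := (fun w₁ w₂ : {w : Matrix (Fin 2) (Fin 2) k //
      Matrix.trace w = 0 ∧ -Matrix.det w = d} =>
    ∃ s : Matrix (Fin 2) (Fin 2) k, Matrix.det s = 1 ∧ s * w₁.val = w₂.val * s) with hrS
  set rk := (fun c₁ c₂ : kˣ => ∃ a b : k, (c₁ : k) = (c₂ : k) * (a ^ 2 - d * b ^ 2)) with hrk
  -- the diagonal unit with determinant c
  have hgcdet : ∀ c : kˣ, Matrix.det (!![(c : k), 0; 0, 1]) ≠ 0 := fun c => by
    rw [Matrix.det_fin_two_of]; simpa using c.ne_zero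
  set gc : kˣ → GL (Fin 2) k :=
    fun c => Matrix.GeneralLinearGroup.mkOfDetNeZero _ (hgcdet c) with hgc
  have hgcdet' : ∀ c : kˣ, Matrix.det ((gc c : Matrix (Fin 2) (Fin 2) k)) = (c : k) := fun c => by
    show Matrix.det (!![(c : k), 0; 0, 1]) = (c : k)
    rw [Matrix.det_fin_two_of]; ring
  set wc : kˣ → {w : Matrix (Fin 2) (Fin 2) k // Matrix.trace w = 0 ∧ -Matrix.det w = d} :=
    fun c => ⟨(gc c : Matrix (Fin 2) (Fin 2) k) * !![0, 1; d, 0] *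
      (((gc c)⁻¹ : GL (Fin 2) k) : Matrix (Fin 2) (Fin 2) k), SL2aux_conj_mem d (gc c)⟩
    with hwc
  -- the choice of a conjugating element for each w
  have hψ : ∀ w : {w : Matrix (Fin 2) (Fin 2) k // Matrix.trace w = 0 ∧ -Matrix.det w = d},
      ∃ g : GL (Fin 2) k, w.val = (g : Matrix (Fin 2) (Fin 2) k) * !![0, 1; d, 0] *
        ((g⁻¹ : GL (Fin 2) k) : Matrix (Fin 2) (Fin 2) k) :=
    fun w => SL2aux_part1 hchar d hd w.val w.2.1 w.2.2
  set ψg := fun w => (hψ w).choose with hψg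
  set ψ : {w : Matrix (Fin 2) (Fin 2) k // Matrix.trace w = 0 ∧ -Matrix.det w = d} → kˣ :=
    fun w => Units.mk0 (Matrix.det ((ψg w : GL (Fin 2) k) : Matrix (Fin 2) (Fin 2) k))
      (SL2aux_gl_det_ne_zero _) with hψdef
  have hψspec : ∀ w, w.val = ((ψg w : GL (Fin 2) k) : Matrix (Fin 2) (Fin 2) k) *
      !![0, 1; d, 0] * (((ψg w)⁻¹ : GL (Fin 2) k) : Matrix (Fin 2) (Fin 2) k) :=
    fun w => (hψ w).choose_spec
  -- forward map
  have hFresp : ∀ c₁ c₂ : kˣ, rk c₁ c₂ → Quot.mk rS (wc c₁) = Quot.mk rS (wc c₂) := by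
    intro c₁ c₂ ⟨a, b, hab⟩
    refine Quot.sound ?_
    obtain ⟨s, hs1, hs⟩ := (SL2aux_part2 d (gc c₁) (gc c₂)).mpr
      ⟨a, b, by rw [hgcdet', hgcdet']; exact hab⟩
    exact ⟨s, hs1, hs⟩
  have hGresp : ∀ w₁ w₂, rS w₁ w₂ → Quot.mk rk (ψ w₁) = Quot.mk rk (ψ w₂) := by
    intro w₁ w₂ ⟨s, hs1, hs⟩
    refine Quot.sound ?_
    obtain ⟨a, b, hab⟩ := (SL2aux_part2 d (ψg w₁) (ψg w₂)).mp
      ⟨s, hs1, by rw [← hψspec w₁, ← hψspec w₂]; exact hs⟩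
    exact ⟨a, b, by simpa [ψ] using hab⟩
  refine ⟨⟨Quot.lift (fun w => Quot.mk rk (ψ w)) hGresp,
    Quot.lift (fun c => Quot.mk rS (wc c)) hFresp, ?_, ?_⟩⟩
  · -- left inverse : S-side round trip
    intro q
    induction q using Quot.ind with
    | _ w =>
      show Quot.mk rS (wc (ψ w)) = Quot.mk rS w
      refine (Quot.sound ?_).symm
      obtain ⟨s, hs1, hs⟩ := (SL2aux_part2 d (ψg w) (gc (ψ w))).mpr
        ⟨1, 0, by rw [hgcdet']; show _ = (Units.mk0 _ _ : kˣ).val * _; rw [Units.val_mk0]; ring⟩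
      exact ⟨s, hs1, by rw [hψspec w]; exact hs⟩
  · -- right inverse : kˣ-side round trip
    intro q
    induction q using Quot.ind with
    | _ c =>
      show Quot.mk rk (ψ (wc c)) = Quot.mk rk c
      refine Quot.sound ?_
      obtain ⟨a, b, hab⟩ := (SL2aux_part2 d (ψg (wc c)) (gc c)).mp
        ⟨1, Matrix.det_one, by rw [← hψspec (wc c), Matrix.one_mul, Matrix.mul_one]⟩
      exact ⟨a, b, by rw [hgcdet'] at hab; simpa [ψ] using hab⟩
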